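/- Let n ≥ 1 and x ≥ n be integers. In the multi-jeep model with exactly n jeeps (no helpers), there is a plan with x tankloads in which every jeep reaches a state with position 1/2 + (1/2)·Σ_{j=n+1}^{x} 1/j and every jeep is at position 0 in the final state; that is, n jeeps can all make a round trip to this distance using x tankloads. -/

import Mathlib

/-- A state of the multi-jeep model with `N` jeeps: each jeep's position and
tank content, and a finitely supported function recording the fuel stored in
depots. -/
structure MultiState (N : ℕ) where
  pos : Fin N → ℝ
  tank : Fin N → ℝ
  depot : ℝ →₀ ℝ

/-- Admissible moves of the multi-jeep model: one jeep drives (consuming one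
tankload of fuel per unit of distance), or fuel is moved between the tank of a
jeep and the depot at its position, or between the tanks of two jeeps at the
same position; tank contents stay in `[0,1]` and depots stay nonnegative. -/
inductive MultiStep {N : ℕ} : MultiState N → MultiState N → Prop
  | drive (s : MultiState N) (i : Fin N) (p' : ℝ)
      (h : 0 ≤ s.tank i - |p' - s.pos i|) :
      MultiStep s ⟨Function.update s.pos i p',
        Function.update s.tank i (s.tank i - |p' - s.pos i|), s.depot⟩
  | transferDepot (s : MultiState N) (i : Fin N) (t' : ℝ) (D' : ℝ →₀ ℝ)
      (hcons : t' + D' (s.pos i) = s.tank i + s.depot (s.pos i))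
      (ht0 : 0 ≤ t') (ht1 : t' ≤ 1)
      (hD : ∀ q, 0 ≤ D' q)
      (heq : ∀ q, q ≠ s.pos i → D' q = s.depot q) :
      MultiStep s ⟨s.pos, Function.update s.tank i t', D'⟩
  | transferJeep (s : MultiState N) (i j : Fin N) (hij : i ≠ j)
      (hpos : s.pos i = s.pos j) (ti' tj' : ℝ)
      (hcons : ti' + tj' = s.tank i + s.tank j)
      (hi0 : 0 ≤ ti') (hi1 : ti' ≤ 1) (hj0 : 0 ≤ tj') (hj1 : tj' ≤ 1) :
      MultiStep s ⟨s.pos,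
        Function.update (Function.update s.tank i ti') j tj', s.depot⟩

/-- The initial state of a plan with `x` tankloads: all jeeps at position `0`
with empty tanks, and `x` tankloads of fuel at position `0`. -/
noncomputable def multiInit (N : ℕ) (x : ℝ) : MultiState N :=
  ⟨fun _ => 0, fun _ => 0, Finsupp.single 0 x⟩
/-- A plan from `s` to `t` in which every jeep in `S` visits position `d`. -/
def PlanV {N : ℕ} (S : Set (Fin N)) (d : ℝ) (s t : MultiState N) : Prop :=
  ∃ (k : ℕ) (f : ℕ → MultiState N), f 0 = s ∧
    (∀ j < k, MultiStep (f j) (f (j + 1))) ∧ f k = t ∧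
    ∀ i ∈ S, ∃ j ≤ k, (f j).pos i = d

theorem PlanV.refl {N : ℕ} (d : ℝ) (s : MultiState N) : PlanV ∅ d s s :=
  ⟨0, fun _ => s, rfl, by omega, rfl, by simp⟩

theorem PlanV.single {N : ℕ} {d : ℝ} {s t : MultiState N} (h : MultiStep s t) :
    PlanV ∅ d s t := by
  refine ⟨1, fun j => if j = 0 then s else t, by simp, ?_, by simp, by simp⟩
  intro j hj
  interval_cases j
  simpa using h

theorem PlanV.mark {N : ℕ} {S : Set (Fin N)} {d : ℝ} {s t : MultiState N}
    (h : PlanV S d s t) (i : Fin N) (hi : s.pos i = d) :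
    PlanV (insert i S) d s t := by
  obtain ⟨k, f, h0, hs, hk, hv⟩ := h
  refine ⟨k, f, h0, hs, hk, ?_⟩
  rintro j (rfl | hj)
  · exact ⟨0, Nat.zero_le _, by rw [h0]; exact hi⟩
  · exact hv j hj

theorem PlanV.trans {N : ℕ} {S T : Set (Fin N)} {d : ℝ} {s u t : MultiState N}
    (h1 : PlanV S d s u) (h2 : PlanV T d u t) : PlanV (S ∪ T) d s t := by
  obtain ⟨k1, f1, h10, h1s, h1k, h1v⟩ := h1
  obtain ⟨k2, f2, h20, h2s, h2k, h2v⟩ := h2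
  refine ⟨k1 + k2, fun j => if j < k1 then f1 j else f2 (j - k1), ?_, ?_, ?_, ?_⟩
  · rcases Nat.eq_zero_or_pos k1 with h | h
    · simp [h, h20, ← h1k, h, h10]
    · simpa [h] using h10
  · intro j hj
    by_cases hjk : j < k1
    · by_cases hjk1 : j + 1 < k1
      · simpa [hjk, hjk1] using h1s j hjk
      · have : j + 1 = k1 := by omega
        have : f2 (j + 1 - k1) = f1 (j + 1) := by
          rw [this]; simp [h20, ← h1k, this]
        show MultiStep (if j < k1 then f1 j else f2 (j - k1)) (if j + 1 < k1 then f1 (j + 1) else f2 (j + 1 - k1))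
        rw [if_pos hjk, if_neg hjk1, this]; exact h1s j hjk
    · have h1 : ¬ j + 1 < k1 := by omega
      have : j + 1 - k1 = (j - k1) + 1 := by omega
      simp only []
      rw [if_neg hjk, if_neg h1, this]
      exact h2s (j - k1) (by omega)
  · by_cases h : k1 + k2 < k1
    · omega
    · simp only [if_neg h]
      rw [Nat.add_sub_cancel_left]; exact h2k
  · rintro i (hi | hi)
    · obtain ⟨j, hj, hv⟩ := h1v i hi
      refine ⟨j, by omega, ?_⟩
      by_cases hjk : j < k1
      · simp [hjk, hv]
      · have : j = k1 := by omega
        subst this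
        simpa [hjk, h20, ← h1k] using hv
    · obtain ⟨j, hj, hv⟩ := h2v i hi
      refine ⟨k1 + j, by omega, ?_⟩
      have : ¬ k1 + j < k1 := by omega
      simpa [this] using hv

theorem mstep_fill {N : ℕ} (s : MultiState N) (i : Fin N) (t' : ℝ)
    (h0 : 0 ≤ t') (h1 : t' ≤ 1) (hD : ∀ q, 0 ≤ s.depot q)
    (h2 : 0 ≤ s.depot (s.pos i) + (s.tank i - t')) :
    MultiStep s ⟨s.pos, Function.update s.tank i t',
      s.depot + Finsupp.single (s.pos i) (s.tank i - t')⟩ := by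
  refine MultiStep.transferDepot s i t' _ ?_ h0 h1 ?_ ?_
  · simp [Finsupp.single_apply]
    ring
  · intro q
    by_cases h : s.pos i = q
    · subst h
      simpa [Finsupp.single_apply] using h2
    · simpa [Finsupp.single_apply, h] using hD q
  · intro q hq
    simp [Finsupp.single_apply, Ne.symm hq]

theorem mstep_drive {N : ℕ} (s : MultiState N) (i : Fin N) (p' : ℝ)
    (h : |p' - s.pos i| ≤ s.tank i) :
    MultiStep s ⟨Function.update s.pos i p',
      Function.update s.tank i (s.tank i - |p' - s.pos i|), s.depot⟩ :=
  MultiStep.drive s i p' (by linarith)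

/-- Jeep `i`, at `a` with empty tank, takes a full tankload, drives to `a + ε`,
deposits all but `ε`, and drives back, ending where it started with empty tank. -/
theorem update_self_of_eq {α β : Type*} [DecidableEq α] (f : α → β) (i : α) (v : β)
    (h : f i = v) : Function.update f i v = f := by rw [← h, Function.update_eq_self]

/-- Jeep `i`, at `a` with empty tank, takes a full tankload, drives to `a + ε`,
deposits all but `ε`, and drives back, ending where it started with empty tank. -/
theorem ferry {N : ℕ} {d : ℝ} (s : MultiState N) (i : Fin N) (a ε : ℝ)
    (hpos : s.pos i = a) (htank : s.tank i = 0) (hD : ∀ q, 0 ≤ s.depot q)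
    (hfuel : 1 ≤ s.depot a) (hε0 : 0 < ε) (hε : ε ≤ 1 / 2) :
    PlanV (∅ : Set (Fin N)) d s
      ⟨s.pos, s.tank, s.depot + Finsupp.single a (-1) + Finsupp.single (a + ε) (1 - 2 * ε)⟩ := by
  set s1 : MultiState N := ⟨s.pos, Function.update s.tank i 1,
    s.depot + Finsupp.single a (-1)⟩ with hs1
  set s2 : MultiState N := ⟨Function.update s.pos i (a + ε),
    Function.update s.tank i (1 - ε), s.depot + Finsupp.single a (-1)⟩ with hs2
  set s3 : MultiState N := ⟨Function.update s.pos i (a + ε),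
    Function.update s.tank i ε,
    s.depot + Finsupp.single a (-1) + Finsupp.single (a + ε) (1 - 2 * ε)⟩ with hs3
  set s4 : MultiState N := ⟨s.pos, s.tank,
    s.depot + Finsupp.single a (-1) + Finsupp.single (a + ε) (1 - 2 * ε)⟩ with hs4
  have habs1 : |(a + ε) - a| = ε := by
    rw [add_sub_cancel_left, abs_of_pos hε0]
  have habs2 : |a - (a + ε)| = ε := by
    rw [sub_add_cancel_left, abs_neg, abs_of_pos hε0]
  have step1 : MultiStep s s1 := by
    have := mstep_fill s i 1 (by norm_num) le_rfl hD
      (by rw [hpos, htank]; linarith)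
    rw [hpos, htank] at this
    have e : (⟨s.pos, Function.update s.tank i 1,
        s.depot + Finsupp.single a ((0:ℝ) - 1)⟩ : MultiState N) = s1 := by
      rw [hs1]; norm_num
    exact e ▸ this
  have step2 : MultiStep s1 s2 := by
    have ht : s1.tank i = 1 := by simp [hs1]
    have hp : s1.pos i = a := by rw [hs1]; exact hpos
    have := mstep_drive s1 i (a + ε) (by rw [hp, habs1, ht]; linarith)
    have e : (⟨Function.update s1.pos i (a + ε),
        Function.update s1.tank i (s1.tank i - |(a + ε) - s1.pos i|), s1.depot⟩ :
        MultiState N) = s2 := by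
      rw [hp, habs1, ht, hs1, hs2]
      simp [Function.update_idem]
    exact e ▸ this
  have hD1 : ∀ q, 0 ≤ s2.depot q := by
    intro q
    simp only [hs2, Finsupp.add_apply, Finsupp.single_apply]
    by_cases h : a = q
    · subst h; simp; linarith
    · simp [h]; exact hD q
  have step3 : MultiStep s2 s3 := by
    have hp2 : s2.pos i = a + ε := by simp [hs2]
    have ht2 : s2.tank i = 1 - ε := by simp [hs2]
    have := mstep_fill s2 i ε (le_of_lt hε0) (by linarith) hD1
      (by rw [hp2, ht2]; have := hD1 (a + ε); linarith)
    rw [hp2, ht2] at this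
    have e : (⟨s2.pos, Function.update s2.tank i ε,
        s2.depot + Finsupp.single (a + ε) (1 - ε - ε)⟩ : MultiState N) = s3 := by
      rw [hs2, hs3, show (1:ℝ) - ε - ε = 1 - 2 * ε by ring]
      simp [Function.update_idem]
    exact e ▸ this
  have step4 : MultiStep s3 s4 := by
    have hp3 : s3.pos i = a + ε := by simp [hs3]
    have ht3 : s3.tank i = ε := by simp [hs3]
    have := mstep_drive s3 i a (by rw [hp3, habs2, ht3])
    have e : (⟨Function.update s3.pos i a,
        Function.update s3.tank i (s3.tank i - |a - s3.pos i|), s3.depot⟩ :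
        MultiState N) = s4 := by
      rw [hp3, habs2, ht3, hs3, hs4]
      simp [Function.update_idem, sub_self, update_self_of_eq _ _ _ hpos,
        update_self_of_eq _ _ _ htank]
    exact e ▸ this
  have := (((PlanV.single (d := d) step1).trans (PlanV.single step2)).trans
    (PlanV.single step3)).trans (PlanV.single step4)
  simpa using this

/-- Jeep `i`, at `a` with empty tank, takes a full tankload, drives to `a + ε`,
and deposits everything there, ending at `a + ε` with empty tank. -/
theorem moveOut {N : ℕ} {d : ℝ} (s : MultiState N) (i : Fin N) (a ε : ℝ)
    (hpos : s.pos i = a) (htank : s.tank i = 0) (hD : ∀ q, 0 ≤ s.depot q)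
    (hfuel : 1 ≤ s.depot a) (hε0 : 0 < ε) (hε : ε ≤ 1 / 2) :
    PlanV (∅ : Set (Fin N)) d s
      ⟨Function.update s.pos i (a + ε), s.tank,
        s.depot + Finsupp.single a (-1) + Finsupp.single (a + ε) (1 - ε)⟩ := by
  set s1 : MultiState N := ⟨s.pos, Function.update s.tank i 1,
    s.depot + Finsupp.single a (-1)⟩ with hs1
  set s2 : MultiState N := ⟨Function.update s.pos i (a + ε),
    Function.update s.tank i (1 - ε), s.depot + Finsupp.single a (-1)⟩ with hs2
  set s3 : MultiState N := ⟨Function.update s.pos i (a + ε), s.tank,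
    s.depot + Finsupp.single a (-1) + Finsupp.single (a + ε) (1 - ε)⟩ with hs3
  have habs1 : |(a + ε) - a| = ε := by
    rw [add_sub_cancel_left, abs_of_pos hε0]
  have step1 : MultiStep s s1 := by
    have := mstep_fill s i 1 (by norm_num) le_rfl hD
      (by rw [hpos, htank]; linarith)
    rw [hpos, htank] at this
    have e : (⟨s.pos, Function.update s.tank i 1,
        s.depot + Finsupp.single a ((0:ℝ) - 1)⟩ : MultiState N) = s1 := by
      rw [hs1]; norm_num
    exact e ▸ this
  have step2 : MultiStep s1 s2 := by
    have ht : s1.tank i = 1 := by simp [hs1]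
    have hp : s1.pos i = a := by rw [hs1]; exact hpos
    have := mstep_drive s1 i (a + ε) (by rw [hp, habs1, ht]; linarith)
    have e : (⟨Function.update s1.pos i (a + ε),
        Function.update s1.tank i (s1.tank i - |(a + ε) - s1.pos i|), s1.depot⟩ :
        MultiState N) = s2 := by
      rw [hp, habs1, ht, hs1, hs2]
      simp [Function.update_idem]
    exact e ▸ this
  have hD1 : ∀ q, 0 ≤ s2.depot q := by
    intro q
    simp only [hs2, Finsupp.add_apply, Finsupp.single_apply]
    by_cases h : a = q
    · subst h; simp; linarith
    · simp [h]; exact hD q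
  have step3 : MultiStep s2 s3 := by
    have hp2 : s2.pos i = a + ε := by simp [hs2]
    have ht2 : s2.tank i = 1 - ε := by simp [hs2]
    have := mstep_fill s2 i 0 le_rfl (by norm_num) hD1
      (by rw [hp2, ht2]; have := hD1 (a + ε); linarith)
    rw [hp2, ht2] at this
    have e : (⟨s2.pos, Function.update s2.tank i 0,
        s2.depot + Finsupp.single (a + ε) (1 - ε - 0)⟩ : MultiState N) = s3 := by
      rw [hs2, hs3, sub_zero]
      simp [Function.update_idem, update_self_of_eq _ _ _ htank]
    exact e ▸ this
  have := ((PlanV.single (d := d) step1).trans (PlanV.single step2)).trans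
    (PlanV.single step3)
  simpa using this

/-- Jeep `i`, at `a` with empty tank, takes a full tankload, drives out to
`a + 1/2` and back, ending where it started with an empty tank. -/
theorem baseTrip {N : ℕ} (s : MultiState N) (i : Fin N) (a : ℝ)
    (hpos : s.pos i = a) (htank : s.tank i = 0) (hD : ∀ q, 0 ≤ s.depot q)
    (hfuel : 1 ≤ s.depot a) :
    PlanV ({i} : Set (Fin N)) (a + 1 / 2) s
      ⟨s.pos, s.tank, s.depot + Finsupp.single a (-1)⟩ := by
  set s1 : MultiState N := ⟨s.pos, Function.update s.tank i 1,
    s.depot + Finsupp.single a (-1)⟩ with hs1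
  set s2 : MultiState N := ⟨Function.update s.pos i (a + 1 / 2),
    Function.update s.tank i (1 / 2), s.depot + Finsupp.single a (-1)⟩ with hs2
  set s3 : MultiState N := ⟨s.pos, s.tank,
    s.depot + Finsupp.single a (-1)⟩ with hs3
  have habs1 : |(a + 1 / 2) - a| = (1 : ℝ) / 2 := by
    rw [add_sub_cancel_left]; norm_num
  have habs2 : |a - (a + 1 / 2)| = (1 : ℝ) / 2 := by
    rw [sub_add_cancel_left, abs_neg]; norm_num
  have step1 : MultiStep s s1 := by
    have := mstep_fill s i 1 (by norm_num) le_rfl hD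
      (by rw [hpos, htank]; linarith)
    rw [hpos, htank] at this
    have e : (⟨s.pos, Function.update s.tank i 1,
        s.depot + Finsupp.single a ((0:ℝ) - 1)⟩ : MultiState N) = s1 := by
      rw [hs1]; norm_num
    exact e ▸ this
  have step2 : MultiStep s1 s2 := by
    have ht : s1.tank i = 1 := by simp [hs1]
    have hp : s1.pos i = a := by rw [hs1]; exact hpos
    have := mstep_drive s1 i (a + 1 / 2) (by rw [hp, habs1, ht]; norm_num)
    have e : (⟨Function.update s1.pos i (a + 1 / 2),
        Function.update s1.tank i (s1.tank i - |(a + 1 / 2) - s1.pos i|), s1.depot⟩ :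
        MultiState N) = s2 := by
      rw [hp, habs1, ht, hs1, hs2]
      norm_num [Function.update_idem]
    exact e ▸ this
  have step3 : MultiStep s2 s3 := by
    have hp2 : s2.pos i = a + 1 / 2 := by simp [hs2]
    have ht2 : s2.tank i = 1 / 2 := by simp [hs2]
    have := mstep_drive s2 i a (by rw [hp2, habs2, ht2])
    have e : (⟨Function.update s2.pos i a,
        Function.update s2.tank i (s2.tank i - |a - s2.pos i|), s2.depot⟩ :
        MultiState N) = s3 := by
      rw [hp2, habs2, ht2, hs2, hs3]
      simp [Function.update_idem, update_self_of_eq _ _ _ hpos,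
        update_self_of_eq _ _ _ htank]
    exact e ▸ this
  have hvis : s2.pos i = a + 1 / 2 := by simp [hs2]
  have h23 : PlanV (insert i ∅) (a + 1 / 2) s2 s3 :=
    (PlanV.single (d := a + 1 / 2) step3).mark i hvis
  have h12 := (PlanV.single (d := a + 1 / 2) step2).trans h23
  have := (PlanV.single (d := a + 1 / 2) step1).trans h12
  simpa using this

/-- Jeep `i`, at `b` with empty tank, takes `ε` of fuel and drives back to
`b - ε`, arriving with an empty tank. -/
theorem moveHome {N : ℕ} {d : ℝ} (s : MultiState N) (i : Fin N) (b ε : ℝ)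
    (hpos : s.pos i = b) (htank : s.tank i = 0) (hD : ∀ q, 0 ≤ s.depot q)
    (hfuel : ε ≤ s.depot b) (hε0 : 0 < ε) (hε : ε ≤ 1 / 2) :
    PlanV (∅ : Set (Fin N)) d s
      ⟨Function.update s.pos i (b - ε), s.tank,
        s.depot + Finsupp.single b (-ε)⟩ := by
  set s1 : MultiState N := ⟨s.pos, Function.update s.tank i ε,
    s.depot + Finsupp.single b (-ε)⟩ with hs1
  set s2 : MultiState N := ⟨Function.update s.pos i (b - ε), s.tank,
    s.depot + Finsupp.single b (-ε)⟩ with hs2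
  have habs : |(b - ε) - b| = ε := by
    rw [show (b - ε) - b = -ε by ring, abs_neg, abs_of_pos hε0]
  have step1 : MultiStep s s1 := by
    have := mstep_fill s i ε (le_of_lt hε0) (by linarith) hD
      (by rw [hpos, htank]; linarith)
    rw [hpos, htank] at this
    have e : (⟨s.pos, Function.update s.tank i ε,
        s.depot + Finsupp.single b ((0:ℝ) - ε)⟩ : MultiState N) = s1 := by
      rw [hs1, zero_sub]
    exact e ▸ this
  have step2 : MultiStep s1 s2 := by
    have ht : s1.tank i = ε := by simp [hs1]
    have hp : s1.pos i = b := by rw [hs1]; exact hpos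
    have := mstep_drive s1 i (b - ε) (by rw [hp, habs, ht])
    have e : (⟨Function.update s1.pos i (b - ε),
        Function.update s1.tank i (s1.tank i - |(b - ε) - s1.pos i|), s1.depot⟩ :
        MultiState N) = s2 := by
      rw [hp, habs, ht, hs1, hs2]
      simp [Function.update_idem, sub_self, update_self_of_eq _ _ _ htank]
    exact e ▸ this
  have := (PlanV.single (d := d) step1).trans (PlanV.single step2)
  simpa using this


theorem eval1_a (D : ℝ →₀ ℝ) (a : ℝ) (α : ℝ) :
    (D + Finsupp.single a α) a = D a + α := by
  simp [Finsupp.single_eq_same]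

theorem eval1_o (D : ℝ →₀ ℝ) (a : ℝ) (α : ℝ) (q : ℝ) (h : a ≠ q) :
    (D + Finsupp.single a α) q = D q := by
  simp [Finsupp.single_eq_of_ne' h]

theorem eval2_a (D : ℝ →₀ ℝ) (a b : ℝ) (α β : ℝ) (hab : b ≠ a) :
    (D + Finsupp.single a α + Finsupp.single b β) a = D a + α := by
  simp [Finsupp.single_eq_same, Finsupp.single_eq_of_ne' hab]

theorem eval2_b (D : ℝ →₀ ℝ) (a b : ℝ) (α β : ℝ) (hab : a ≠ b) :
    (D + Finsupp.single a α + Finsupp.single b β) b = D b + β := by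
  simp [Finsupp.single_eq_same, Finsupp.single_eq_of_ne' hab]

theorem eval2_o (D : ℝ →₀ ℝ) (a b : ℝ) (α β : ℝ) (q : ℝ) (ha : a ≠ q) (hb : b ≠ q) :
    (D + Finsupp.single a α + Finsupp.single b β) q = D q := by
  simp [Finsupp.single_eq_of_ne' ha, Finsupp.single_eq_of_ne' hb]

theorem ferry_iter {N : ℕ} {d : ℝ} (i : Fin N) (a ε : ℝ)
    (hε0 : 0 < ε) (hε : ε ≤ 1 / 2) (c : ℕ) :
    ∀ s : MultiState N, s.pos i = a → s.tank i = 0 → (∀ q, 0 ≤ s.depot q) →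
    ((c : ℝ) ≤ s.depot a) →
    PlanV (∅ : Set (Fin N)) d s
      ⟨s.pos, s.tank, s.depot + Finsupp.single a (-(c : ℝ))
        + Finsupp.single (a + ε) ((c : ℝ) * (1 - 2 * ε))⟩ := by
  have hab : a ≠ a + ε := by intro h; nlinarith [congrArg id h]
  induction c with
  | zero =>
    intro s hpos htank hD hfuel
    have e : s = (⟨s.pos, s.tank, s.depot + Finsupp.single a (-(0:ℕ) : ℝ)
        + Finsupp.single (a + ε) (((0:ℕ) : ℝ) * (1 - 2 * ε))⟩ : MultiState N) := by
      simp
    exact e ▸ PlanV.refl d s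
  | succ c ih =>
    intro s hpos htank hD hfuel
    have hc1 : (1 : ℝ) ≤ s.depot a := by
      have : (0:ℝ) ≤ c := Nat.cast_nonneg c
      push_cast at hfuel; linarith
    have h1 := ferry (d := d) s i a ε hpos htank hD hc1 hε0 hε
    set s1 : MultiState N := ⟨s.pos, s.tank, s.depot + Finsupp.single a (-1)
      + Finsupp.single (a + ε) (1 - 2 * ε)⟩ with hs1
    have hba : a + ε ≠ a := fun h => hab h.symm
    have hD1 : ∀ q, 0 ≤ s1.depot q := by
      intro q
      show 0 ≤ (s.depot + Finsupp.single a (-1) + Finsupp.single (a + ε) (1 - 2 * ε) : ℝ →₀ ℝ) q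
      by_cases h1 : q = a
      · subst h1
        rw [eval2_a _ _ _ _ _ hba]
        linarith
      · by_cases h2 : q = a + ε
        · subst h2
          rw [eval2_b _ _ _ _ _ hab]
          have := hD (a + ε)
          linarith
        · rw [eval2_o _ _ _ _ _ _ (fun h => h1 h.symm) (fun h => h2 h.symm)]
          exact hD q
    have hIH := ih s1 (by rw [hs1]; exact hpos) (by rw [hs1]; exact htank) hD1
      (by
        show (c : ℝ) ≤ (s.depot + Finsupp.single a (-1) + Finsupp.single (a + ε) (1 - 2 * ε) : ℝ →₀ ℝ) a
        rw [eval2_a _ _ _ _ _ hba]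
        push_cast at hfuel
        linarith)
    have hP := h1.trans hIH
    have e : (⟨s1.pos, s1.tank, s1.depot + Finsupp.single a (-(c : ℝ))
        + Finsupp.single (a + ε) ((c : ℝ) * (1 - 2 * ε))⟩ : MultiState N)
        = ⟨s.pos, s.tank, s.depot + Finsupp.single a (-((c + 1 : ℕ) : ℝ))
        + Finsupp.single (a + ε) (((c + 1 : ℕ) : ℝ) * (1 - 2 * ε))⟩ := by
      rw [hs1]
      congr 1
      ext q
      simp only [Finsupp.add_apply, Finsupp.single_apply]
      push_cast
      split_ifs <;> ring
    have := e ▸ hP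
    simpa using this

theorem PlanV.mono {N : ℕ} {S S' : Set (Fin N)} {d : ℝ} {s t : MultiState N}
    (h : PlanV S d s t) (hsub : S' ⊆ S) : PlanV S' d s t := by
  obtain ⟨k, f, h0, hs, hk, hv⟩ := h
  exact ⟨k, f, h0, hs, hk, fun i hi => hv i (hsub hi)⟩

theorem moveOut_iter {N : ℕ} {d : ℝ} (a ε : ℝ) (hε0 : 0 < ε) (hε : ε ≤ 1 / 2) :
    ∀ (c : ℕ), c ≤ N → ∀ s : MultiState N,
    (∀ i, s.pos i = a) → (∀ i, s.tank i = 0) → (∀ q, 0 ≤ s.depot q) →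
    ((c : ℝ) ≤ s.depot a) →
    PlanV (∅ : Set (Fin N)) d s
      ⟨fun i => if (i : ℕ) < c then a + ε else a, s.tank,
        s.depot + Finsupp.single a (-(c : ℝ))
        + Finsupp.single (a + ε) ((c : ℝ) * (1 - ε))⟩ := by
  have hab : a ≠ a + ε := by intro h; nlinarith [congrArg id h]
  have hba : a + ε ≠ a := fun h => hab h.symm
  intro c
  induction c with
  | zero =>
    intro _ s hpos htank hD hfuel
    have e : s = (⟨fun i => if (i : ℕ) < 0 then a + ε else a, s.tank,
        s.depot + Finsupp.single a (-(0 : ℕ) : ℝ)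
        + Finsupp.single (a + ε) (((0 : ℕ) : ℝ) * (1 - ε))⟩ : MultiState N) := by
      obtain ⟨po, ta, de⟩ := s
      simp only at hpos
      congr 1
      · funext i
        simp [hpos i]
      · simp
    exact e ▸ PlanV.refl d s
  | succ c ih =>
    intro hc s hpos htank hD hfuel
    have hcN : c ≤ N := by omega
    have hfc : (c : ℝ) ≤ s.depot a := by push_cast at hfuel ⊢; linarith
    have P1 := ih hcN s hpos htank hD hfc
    set t1 : MultiState N := ⟨fun i => if (i : ℕ) < c then a + ε else a, s.tank,
      s.depot + Finsupp.single a (-(c : ℝ))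
      + Finsupp.single (a + ε) ((c : ℝ) * (1 - ε))⟩ with ht1
    have hD1 : ∀ q, 0 ≤ t1.depot q := by
      intro q
      show 0 ≤ (s.depot + Finsupp.single a (-(c : ℝ))
        + Finsupp.single (a + ε) ((c : ℝ) * (1 - ε)) : ℝ →₀ ℝ) q
      by_cases h1 : q = a
      · subst h1
        rw [eval2_a _ _ _ _ _ hba]
        push_cast at hfuel
        linarith
      · by_cases h2 : q = a + ε
        · subst h2
          rw [eval2_b _ _ _ _ _ hab]
          have := hD (a + ε)
          have hc0 : (0:ℝ) ≤ (c : ℝ) := Nat.cast_nonneg c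
          nlinarith
        · rw [eval2_o _ _ _ _ _ _ (fun h => h1 h.symm) (fun h => h2 h.symm)]
          exact hD q
    have hf1 : (1 : ℝ) ≤ t1.depot a := by
      show (1:ℝ) ≤ (s.depot + Finsupp.single a (-(c : ℝ))
        + Finsupp.single (a + ε) ((c : ℝ) * (1 - ε)) : ℝ →₀ ℝ) a
      rw [eval2_a _ _ _ _ _ hba]
      push_cast at hfuel
      linarith
    have jc : Fin N := ⟨c, by omega⟩
    have P2 := moveOut (d := d) t1 ⟨c, by omega⟩ a ε
      (by show (if c < c then a + ε else a) = a; simp)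
      (by exact htank _) hD1 hf1 hε0 hε
    have e : (⟨Function.update t1.pos ⟨c, by omega⟩ (a + ε), t1.tank,
        t1.depot + Finsupp.single a (-1) + Finsupp.single (a + ε) (1 - ε)⟩ : MultiState N)
        = ⟨fun i => if (i : ℕ) < c + 1 then a + ε else a, s.tank,
        s.depot + Finsupp.single a (-((c + 1 : ℕ) : ℝ))
        + Finsupp.single (a + ε) (((c + 1 : ℕ) : ℝ) * (1 - ε))⟩ := by
      rw [ht1]
      congr 1
      · funext i
        by_cases h : i = (⟨c, by omega⟩ : Fin N)
        · subst h
          rw [Function.update_self, if_pos (Nat.lt_succ_self c)]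
        · have hne : (i : ℕ) ≠ c := fun hh => h (Fin.ext hh)
          rw [Function.update_of_ne h]
          by_cases h2 : (i : ℕ) < c
          · simp only [if_pos h2, if_pos (show (i : ℕ) < c + 1 by omega)]
          · simp only [if_neg h2, if_neg (show ¬ (i : ℕ) < c + 1 by omega)]
      · ext q
        simp only [Finsupp.add_apply, Finsupp.single_apply]
        push_cast
        split_ifs <;> ring
    exact (P1.trans (e ▸ P2)).mono (by simp)

theorem moveHome_iter {N : ℕ} {d : ℝ} (b ε : ℝ) (hε0 : 0 < ε) (hε : ε ≤ 1 / 2) :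
    ∀ (c : ℕ), c ≤ N → ∀ s : MultiState N,
    (∀ i, s.pos i = b) → (∀ i, s.tank i = 0) → (∀ q, 0 ≤ s.depot q) →
    ((c : ℝ) * ε ≤ s.depot b) →
    PlanV (∅ : Set (Fin N)) d s
      ⟨fun i => if (i : ℕ) < c then b - ε else b, s.tank,
        s.depot + Finsupp.single b (-((c : ℝ) * ε))⟩ := by
  intro c
  induction c with
  | zero =>
    intro _ s hpos htank hD hfuel
    have e : s = (⟨fun i => if (i : ℕ) < 0 then b - ε else b, s.tank,
        s.depot + Finsupp.single b (-(((0 : ℕ) : ℝ) * ε))⟩ : MultiState N) := by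
      obtain ⟨po, ta, de⟩ := s
      simp only at hpos
      congr 1
      · funext i
        simp [hpos i]
      · simp
    exact e ▸ PlanV.refl d s
  | succ c ih =>
    intro hc s hpos htank hD hfuel
    have hcN : c ≤ N := by omega
    have hfc : (c : ℝ) * ε ≤ s.depot b := by push_cast at hfuel ⊢; nlinarith
    have P1 := ih hcN s hpos htank hD hfc
    set t1 : MultiState N := ⟨fun i => if (i : ℕ) < c then b - ε else b, s.tank,
      s.depot + Finsupp.single b (-((c : ℝ) * ε))⟩ with ht1
    have hD1 : ∀ q, 0 ≤ t1.depot q := by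
      intro q
      show 0 ≤ (s.depot + Finsupp.single b (-((c : ℝ) * ε)) : ℝ →₀ ℝ) q
      by_cases h1 : q = b
      · subst h1
        rw [eval1_a]
        push_cast at hfuel
        nlinarith
      · rw [eval1_o _ _ _ _ (fun h => h1 h.symm)]
        exact hD q
    have hf1 : ε ≤ t1.depot b := by
      show ε ≤ (s.depot + Finsupp.single b (-((c : ℝ) * ε)) : ℝ →₀ ℝ) b
      rw [eval1_a]
      push_cast at hfuel
      nlinarith
    have P2 := moveHome (d := d) t1 ⟨c, by omega⟩ b ε
      (by show (if c < c then b - ε else b) = b; simp)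
      (by exact htank _) hD1 hf1 hε0 hε
    have e : (⟨Function.update t1.pos ⟨c, by omega⟩ (b - ε), t1.tank,
        t1.depot + Finsupp.single b (-ε)⟩ : MultiState N)
        = ⟨fun i => if (i : ℕ) < c + 1 then b - ε else b, s.tank,
        s.depot + Finsupp.single b (-(((c + 1 : ℕ) : ℝ) * ε))⟩ := by
      rw [ht1]
      congr 1
      · funext i
        by_cases h : i = (⟨c, by omega⟩ : Fin N)
        · subst h
          rw [Function.update_self, if_pos (Nat.lt_succ_self c)]
        · have hne : (i : ℕ) ≠ c := fun hh => h (Fin.ext hh)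
          rw [Function.update_of_ne h]
          by_cases h2 : (i : ℕ) < c
          · simp only [if_pos h2, if_pos (show (i : ℕ) < c + 1 by omega)]
          · simp only [if_neg h2, if_neg (show ¬ (i : ℕ) < c + 1 by omega)]
      · ext q
        simp only [Finsupp.add_apply, Finsupp.single_apply]
        push_cast
        split_ifs <;> ring
    exact (P1.trans (e ▸ P2)).mono (by simp)

theorem baseTrip_iter {N : ℕ} (a : ℝ) :
    ∀ (c : ℕ), c ≤ N → ∀ s : MultiState N,
    (∀ i, s.pos i = a) → (∀ i, s.tank i = 0) → (∀ q, 0 ≤ s.depot q) →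
    ((c : ℝ) ≤ s.depot a) →
    PlanV ({i : Fin N | (i : ℕ) < c}) (a + 1 / 2) s
      ⟨s.pos, s.tank, s.depot + Finsupp.single a (-(c : ℝ))⟩ := by
  intro c
  induction c with
  | zero =>
    intro _ s hpos htank hD hfuel
    have e : s = (⟨s.pos, s.tank,
        s.depot + Finsupp.single a (-((0 : ℕ) : ℝ))⟩ : MultiState N) := by
      obtain ⟨po, ta, de⟩ := s
      simp
    have h0 : ({i : Fin N | (i : ℕ) < 0} : Set (Fin N)) = ∅ := by
      ext i; simp
    rw [h0]
    exact e ▸ PlanV.refl _ s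
  | succ c ih =>
    intro hc s hpos htank hD hfuel
    have hcN : c ≤ N := by omega
    have hfc : (c : ℝ) ≤ s.depot a := by push_cast at hfuel ⊢; linarith
    have P1 := ih hcN s hpos htank hD hfc
    set t1 : MultiState N := ⟨s.pos, s.tank,
      s.depot + Finsupp.single a (-(c : ℝ))⟩ with ht1
    have hD1 : ∀ q, 0 ≤ t1.depot q := by
      intro q
      show 0 ≤ (s.depot + Finsupp.single a (-(c : ℝ)) : ℝ →₀ ℝ) q
      by_cases h1 : q = a
      · subst h1
        rw [eval1_a]
        push_cast at hfuel
        linarith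
      · rw [eval1_o _ _ _ _ (fun h => h1 h.symm)]
        exact hD q
    have hf1 : (1 : ℝ) ≤ t1.depot a := by
      show (1:ℝ) ≤ (s.depot + Finsupp.single a (-(c : ℝ)) : ℝ →₀ ℝ) a
      rw [eval1_a]
      push_cast at hfuel
      linarith
    have P2 := baseTrip t1 ⟨c, by omega⟩ a (hpos _) (htank _) hD1 hf1
    have e : (⟨t1.pos, t1.tank, t1.depot + Finsupp.single a (-1)⟩ : MultiState N)
        = ⟨s.pos, s.tank, s.depot + Finsupp.single a (-((c + 1 : ℕ) : ℝ))⟩ := by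
      rw [ht1]
      congr 1
      ext q
      simp only [Finsupp.add_apply, Finsupp.single_apply]
      push_cast
      split_ifs <;> ring
    have := P1.trans (e ▸ P2)
    refine this.mono ?_
    intro i hi
    simp only [Set.mem_setOf_eq] at hi
    by_cases h : (i : ℕ) < c
    · exact Or.inl h
    · have : (i : ℕ) = c := by omega
      exact Or.inr (by simpa [Set.mem_singleton_iff] using Fin.ext this)

theorem key {n : ℕ} (hn : 1 ≤ n) : ∀ (m : ℕ) (a : ℝ) (s : MultiState n),
    (∀ i, s.pos i = a) → (∀ i, s.tank i = 0) → (∀ q, 0 ≤ s.depot q) →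
    ((n : ℝ) + m ≤ s.depot a) →
    ∃ t : MultiState n,
      PlanV Set.univ (a + (1 / 2 + 1 / 2 * ∑ l ∈ Finset.Icc (n + 1) (n + m), (1 : ℝ) / l)) s t ∧
      (∀ i, t.pos i = a) ∧ (∀ i, t.tank i = 0) ∧ (∀ q, 0 ≤ t.depot q) ∧
      s.depot a - ((n : ℝ) + m) ≤ t.depot a ∧ ∀ q, q < a → t.depot q = s.depot q := by
  intro m
  induction m with
  | zero =>
    intro a s hpos htank hD hfuel
    have hfn : (n : ℝ) ≤ s.depot a := by push_cast at hfuel; linarith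
    have P := baseTrip_iter a n le_rfl s hpos htank hD hfn
    have huniv : ({i : Fin n | (i : ℕ) < n} : Set (Fin n)) = Set.univ := by
      ext i; simp [i.isLt]
    have hd : a + 1 / 2
        = a + (1 / 2 + 1 / 2 * ∑ l ∈ Finset.Icc (n + 1) (n + 0), (1 : ℝ) / l) := by
      rw [Finset.Icc_eq_empty (by omega), Finset.sum_empty]
      ring
    rw [huniv, hd] at P
    refine ⟨_, P, hpos, htank, ?_, ?_, ?_⟩
    · intro q
      show 0 ≤ (s.depot + Finsupp.single a (-(n : ℝ)) : ℝ →₀ ℝ) q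
      by_cases h1 : q = a
      · subst h1
        rw [eval1_a]
        linarith
      · rw [eval1_o _ _ _ _ (fun h => h1 h.symm)]
        exact hD q
    · show s.depot a - ((n : ℝ) + (0 : ℕ)) ≤
        (s.depot + Finsupp.single a (-(n : ℝ)) : ℝ →₀ ℝ) a
      rw [eval1_a]
      push_cast
      linarith
    · intro q hq
      show (s.depot + Finsupp.single a (-(n : ℝ)) : ℝ →₀ ℝ) q = s.depot q
      rw [eval1_o _ _ _ _ (fun h => (ne_of_lt hq) h.symm)]
  | succ m ih =>
    intro a s hpos htank hD hfuel
    have hden : (0 : ℝ) < (n : ℝ) + m + 1 := by positivity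
    set ε : ℝ := 1 / (2 * ((n : ℝ) + m + 1)) with hεdef
    have hε0 : 0 < ε := by rw [hεdef]; positivity
    have hε : ε ≤ 1 / 2 := by
      rw [hεdef, div_le_div_iff₀ (by positivity) (by norm_num)]
      nlinarith [Nat.cast_nonneg (α := ℝ) n, Nat.cast_nonneg (α := ℝ) m]
    set b : ℝ := a + ε with hbdef
    have hab : a ≠ b := by rw [hbdef]; intro h; nlinarith [congrArg id h]
    have hba : b ≠ a := fun h => hab h.symm
    have hlt : a < b := by rw [hbdef]; linarith
    -- Phase 1 : jeep 0 ferries m+1 tankloads forward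
    have P1 := ferry_iter (d := a + (1 / 2 + 1 / 2 *
        ∑ l ∈ Finset.Icc (n + 1) (n + (m + 1)), (1 : ℝ) / l))
      (⟨0, by omega⟩ : Fin n) a ε hε0 hε (m + 1) s (hpos _) (htank _) hD
      (by push_cast at hfuel ⊢; linarith)
    set t1 : MultiState n := ⟨s.pos, s.tank,
      s.depot + Finsupp.single a (-((m + 1 : ℕ) : ℝ))
      + Finsupp.single (a + ε) (((m + 1 : ℕ) : ℝ) * (1 - 2 * ε))⟩ with ht1
    have hD1 : ∀ q, 0 ≤ t1.depot q := by
      intro q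
      show 0 ≤ (s.depot + Finsupp.single a (-((m + 1 : ℕ) : ℝ))
        + Finsupp.single (a + ε) (((m + 1 : ℕ) : ℝ) * (1 - 2 * ε)) : ℝ →₀ ℝ) q
      by_cases h1 : q = a
      · subst h1
        rw [eval2_a _ _ _ _ _ hba]
        push_cast at hfuel ⊢
        linarith
      · by_cases h2 : q = b
        · subst h2
          rw [hbdef, eval2_b _ _ _ _ _ hab]
          have h0 := hD (a + ε)
          have h1 : (0:ℝ) ≤ ((m + 1 : ℕ) : ℝ) := Nat.cast_nonneg _
          nlinarith
        · rw [eval2_o _ _ _ _ _ _ (fun h => h1 h.symm) (fun h => h2 (by rw [hbdef]; exact h.symm))]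
          exact hD q
    -- Phase 2 : all n jeeps drive out to b, depositing everything
    have P2 := moveOut_iter (d := a + (1 / 2 + 1 / 2 *
        ∑ l ∈ Finset.Icc (n + 1) (n + (m + 1)), (1 : ℝ) / l))
      a ε hε0 hε n le_rfl t1 (by intro i; exact hpos i) (by intro i; exact htank i) hD1
      (by
        show (n : ℝ) ≤ (s.depot + Finsupp.single a (-((m + 1 : ℕ) : ℝ))
          + Finsupp.single (a + ε) (((m + 1 : ℕ) : ℝ) * (1 - 2 * ε)) : ℝ →₀ ℝ) a
        rw [eval2_a _ _ _ _ _ hba]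
        push_cast at hfuel ⊢
        linarith)
    set t2 : MultiState n := ⟨fun _ => b, s.tank,
      s.depot + Finsupp.single a (-((n : ℝ) + m + 1))
      + Finsupp.single b (((n : ℝ) + m) + (n : ℝ) * ε)⟩ with ht2
    have e2 : (⟨fun i => if (i : ℕ) < n then a + ε else a, t1.tank,
        t1.depot + Finsupp.single a (-(n : ℝ))
        + Finsupp.single (a + ε) ((n : ℝ) * (1 - ε))⟩ : MultiState n) = t2 := by
      rw [ht1, ht2]
      congr 1
      · funext i
        rw [if_pos i.isLt, hbdef]
      · ext q
        simp only [Finsupp.add_apply, Finsupp.single_apply, hbdef]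
        push_cast
        have hne2 : (2 * ((n : ℝ) + m + 1)) ≠ 0 := by positivity
        split_ifs <;> (try rw [hεdef]) <;> (try field_simp) <;> ring
    rw [e2] at P2
    have hD2 : ∀ q, 0 ≤ t2.depot q := by
      intro q
      show 0 ≤ (s.depot + Finsupp.single a (-((n : ℝ) + m + 1))
        + Finsupp.single b (((n : ℝ) + m) + (n : ℝ) * ε) : ℝ →₀ ℝ) q
      by_cases h1 : q = a
      · subst h1
        rw [eval2_a _ _ _ _ _ hba]
        push_cast at hfuel ⊢
        linarith
      · by_cases h2 : q = b
        · subst h2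
          rw [eval2_b _ _ _ _ _ hab]
          have := hD b
          have h1 : (0:ℝ) ≤ (n : ℝ) := Nat.cast_nonneg _
          have h3 : (0:ℝ) ≤ (m : ℝ) := Nat.cast_nonneg _
          nlinarith
        · rw [eval2_o _ _ _ _ _ _ (fun h => h1 h.symm) (fun h => h2 h.symm)]
          exact hD q
    -- Phase 3 : recursive round trips based at b
    obtain ⟨t3, P3, hpos3, htank3, hD3, hfa3, hbehind3⟩ := ih b t2
      (fun i => rfl) (fun i => htank i) hD2
      (by
        show (n : ℝ) + m ≤ (s.depot + Finsupp.single a (-((n : ℝ) + m + 1))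
          + Finsupp.single b (((n : ℝ) + m) + (n : ℝ) * ε) : ℝ →₀ ℝ) b
        rw [eval2_b _ _ _ _ _ hab]
        have := hD b
        have h1 : (0:ℝ) ≤ (n : ℝ) := Nat.cast_nonneg _
        nlinarith)
    have hd : b + (1 / 2 + 1 / 2 * ∑ l ∈ Finset.Icc (n + 1) (n + m), (1 : ℝ) / l)
        = a + (1 / 2 + 1 / 2 * ∑ l ∈ Finset.Icc (n + 1) (n + (m + 1)), (1 : ℝ) / l) := by
      have hnm : n + 1 ≤ n + m + 1 := by omega
      rw [show n + (m + 1) = (n + m) + 1 by omega, Finset.sum_Icc_succ_top hnm]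
      rw [hbdef, hεdef]
      push_cast
      field_simp
      ring
    rw [hd] at P3
    -- Phase 4 : all jeeps drive home from b to a
    have hfb3 : (n : ℝ) * ε ≤ t3.depot b := by
      have : ((n : ℝ) + m) + (n : ℝ) * ε - ((n : ℝ) + m) ≤ t3.depot b - s.depot b := by
        have := hfa3
        show _ ≤ t3.depot b - s.depot b
        have he : t2.depot b = s.depot b + (((n : ℝ) + m) + (n : ℝ) * ε) := by
          show (s.depot + Finsupp.single a (-((n : ℝ) + m + 1))
            + Finsupp.single b (((n : ℝ) + m) + (n : ℝ) * ε) : ℝ →₀ ℝ) b = _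
          rw [eval2_b _ _ _ _ _ hab]
        rw [he] at this
        linarith
      have := hD b
      linarith
    have P4 := moveHome_iter (d := a + (1 / 2 + 1 / 2 *
        ∑ l ∈ Finset.Icc (n + 1) (n + (m + 1)), (1 : ℝ) / l))
      b ε hε0 hε n le_rfl t3 hpos3 htank3 hD3 hfb3
    set t4 : MultiState n := ⟨fun _ => a, t3.tank,
      t3.depot + Finsupp.single b (-((n : ℝ) * ε))⟩ with ht4
    have e4 : (⟨fun i => if (i : ℕ) < n then b - ε else b, t3.tank,
        t3.depot + Finsupp.single b (-(((n : ℕ) : ℝ) * ε))⟩ : MultiState n) = t4 := by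
      rw [ht4]
      congr 1
      funext i
      rw [if_pos i.isLt, hbdef]
      ring
    rw [e4] at P4
    -- Assemble
    have P := ((P1.trans P2).trans P3).trans P4
    refine ⟨t4, P.mono (by simp), fun i => rfl, htank3, ?_, ?_, ?_⟩
    · intro q
      show 0 ≤ (t3.depot + Finsupp.single b (-((n : ℝ) * ε)) : ℝ →₀ ℝ) q
      by_cases h1 : q = b
      · subst h1
        rw [eval1_a]
        linarith
      · rw [eval1_o _ _ _ _ (fun h => h1 h.symm)]
        exact hD3 q
    · show s.depot a - ((n : ℝ) + ((m + 1 : ℕ) : ℝ)) ≤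
        (t3.depot + Finsupp.single b (-((n : ℝ) * ε)) : ℝ →₀ ℝ) a
      rw [eval1_o _ _ _ _ hba]
      rw [hbehind3 a hlt]
      have he : t2.depot a = s.depot a - ((n : ℝ) + m + 1) := by
        show (s.depot + Finsupp.single a (-((n : ℝ) + m + 1))
          + Finsupp.single b (((n : ℝ) + m) + (n : ℝ) * ε) : ℝ →₀ ℝ) a = _
        rw [eval2_a _ _ _ _ _ hba]
        ring
      rw [he]
      push_cast
      linarith
    · intro q hq
      show (t3.depot + Finsupp.single b (-((n : ℝ) * ε)) : ℝ →₀ ℝ) q = s.depot q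
      rw [eval1_o _ _ _ _ (fun h => (ne_of_lt (hq.trans hlt)) h.symm)]
      rw [hbehind3 q (hq.trans hlt)]
      show (s.depot + Finsupp.single a (-((n : ℝ) + m + 1))
        + Finsupp.single b (((n : ℝ) + m) + (n : ℝ) * ε) : ℝ →₀ ℝ) q = _
      rw [eval2_o _ _ _ _ _ _ (fun h => (ne_of_lt hq) h.symm)
        (fun h => (ne_of_lt (hq.trans hlt)) h.symm)]

/-- With exactly `n ≥ 1` jeeps and `x ≥ n` tankloads, there is a plan in which
every jeep reaches a state with position `1/2 + (1/2)·Σ_{j=n+1}^{x} 1/j` and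
every jeep is at position `0` in the final state: all `n` jeeps can make a
round trip to this distance. -/
theorem multi_roundtrip_reachable (n x : ℕ) (hn : 1 ≤ n) (hx : n ≤ x) :
    ∃ (k : ℕ) (f : ℕ → MultiState n),
      f 0 = multiInit n (x : ℝ) ∧
      (∀ j < k, MultiStep (f j) (f (j + 1))) ∧
      (∀ i : Fin n, ∃ j ≤ k,
        (f j).pos i = 1 / 2 + 1 / 2 * ∑ l ∈ Finset.Icc (n + 1) x, 1 / (l : ℝ)) ∧
      (∀ i : Fin n, (f k).pos i = 0) := by
  obtain ⟨t, P, hpos, -, -, -, -⟩ := key hn (x - n) 0 (multiInit n (x : ℝ))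
    (fun i => rfl) (fun i => rfl)
    (by
      intro q
      show 0 ≤ (Finsupp.single 0 (x : ℝ)) q
      by_cases h : (0 : ℝ) = q
      · rw [← h, Finsupp.single_eq_same]
        positivity
      · rw [Finsupp.single_eq_of_ne' h])
    (by
      show (n : ℝ) + ((x - n : ℕ) : ℝ) ≤ (Finsupp.single 0 (x : ℝ)) 0
      rw [Finsupp.single_eq_same]
      have : ((x - n : ℕ) : ℝ) = (x : ℝ) - n := by
        push_cast [Nat.cast_sub hx]
        ring
      rw [this]
      linarith)
  have hIcc : n + (x - n) = x := by omega
  rw [hIcc] at P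
  have hd : (0 : ℝ) + (1 / 2 + 1 / 2 * ∑ l ∈ Finset.Icc (n + 1) x, (1 : ℝ) / l)
      = 1 / 2 + 1 / 2 * ∑ l ∈ Finset.Icc (n + 1) x, 1 / (l : ℝ) := by
    ring
  rw [hd] at P
  obtain ⟨k, f, h0, hs, hk, hv⟩ := P
  refine ⟨k, f, h0, hs, fun i => hv i (Set.mem_univ i), fun i => ?_⟩
  rw [hk]
  exact hpos i
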